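/- arXiv:1804.10612 — 3 statements merged into one kernel-verified Lean document; each statement's English description precedes it below -/
import Mathlib

section
/- If the shared state is separable, i.e. ρ^{AB} = Σ_λ p_λ ρ^A_λ ⊗ ρ^B_λ with p_λ ≥ 0 and ρ^A_λ, ρ^B_λ states, then every channel operator is separable: M̃_a^{VB} = Σ_λ p_λ M^V_{a|λ} ⊗ ρ^B_λ, where M^V_{a|λ} = tr_A[M_a^{VA}(1_V ⊗ ρ^A_λ)] is positive semidefinite for every a and λ. -/
open Matrix ComplexOrder
open scoped Kronecker

namespace Tele

noncomputable def ptrace₁ {V B : Type*} [Fintype V]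
    (M : Matrix (V × B) (V × B) ℂ) : Matrix B B ℂ :=
  Matrix.of fun b b' => ∑ v, M (v, b) (v, b')

noncomputable def ptrace₂ {V B : Type*} [Fintype B]
    (M : Matrix (V × B) (V × B) ℂ) : Matrix V V ℂ :=
  Matrix.of fun v v' => ∑ b, M (v, b) (v', b)

noncomputable def ptraceMid {V A B : Type*} [Fintype A]
    (M : Matrix (V × A × B) (V × A × B) ℂ) : Matrix (V × B) (V × B) ℂ :=
  Matrix.of fun p q => ∑ a, M (p.1, a, p.2) (q.1, a, q.2)

noncomputable def ptraceVA {V A B : Type*} [Fintype V] [Fintype A]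
    (M : Matrix (V × A × B) (V × A × B) ℂ) : Matrix B B ℂ :=
  Matrix.of fun b b' => ∑ v, ∑ a, M (v, a, b) (v, a, b')

noncomputable def ptraceV₁A {V V₁ A B : Type*} [Fintype V₁] [Fintype A]
    (M : Matrix (V × V₁ × A × B) (V × V₁ × A × B) ℂ) : Matrix (V × B) (V × B) ℂ :=
  Matrix.of fun p q => ∑ v₁, ∑ a, M (p.1, v₁, a, p.2) (q.1, v₁, a, q.2)

def ptranspose₁ {V B : Type*} (M : Matrix (V × B) (V × B) ℂ) : Matrix (V × B) (V × B) ℂ :=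
  Matrix.of fun p q => M (q.1, p.2) (p.1, q.2)

def ptranspose₂ {V B : Type*} (M : Matrix (V × B) (V × B) ℂ) : Matrix (V × B) (V × B) ℂ :=
  Matrix.of fun p q => M (p.1, q.2) (q.1, p.2)

def Separable {V B : Type*} [Fintype V] [Fintype B]
    (M : Matrix (V × B) (V × B) ℂ) : Prop :=
  ∃ (n : ℕ) (τ : Fin n → Matrix V V ℂ) (χ : Fin n → Matrix B B ℂ),
    (∀ i, (τ i).PosSemidef) ∧ (∀ i, (χ i).PosSemidef) ∧ M = ∑ i, τ i ⊗ₖ χ i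

def IsState {V : Type*} [Fintype V] (ρ : Matrix V V ℂ) : Prop :=
  ρ.PosSemidef ∧ ρ.trace = 1

noncomputable def maxEnt (d : ℕ) : Matrix (Fin d × Fin d) (Fin d × Fin d) ℂ :=
  Matrix.of fun p q => if p.1 = p.2 ∧ q.1 = q.2 then (d : ℂ)⁻¹ else 0

noncomputable def chanOp {V A B : Type*} [Fintype V] [Fintype A] [Fintype B]
    [DecidableEq V] [DecidableEq B]
    (M : Matrix (V × A) (V × A) ℂ) (ρ : Matrix (A × B) (A × B) ℂ) :
    Matrix (V × B) (V × B) ℂ :=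
  ptraceMid ((Matrix.reindex (Equiv.prodAssoc V A B) (Equiv.prodAssoc V A B)
      (M ⊗ₖ (1 : Matrix B B ℂ))) * ((1 : Matrix V V ℂ) ⊗ₖ ρ))

noncomputable def teleA {V A B : Type*} [Fintype V] [Fintype A] [Fintype B] [DecidableEq B]
    (M : Matrix (V × A) (V × A) ℂ) (ρ : Matrix (A × B) (A × B) ℂ) (ω : Matrix V V ℂ) :
    Matrix B B ℂ :=
  ptraceVA ((Matrix.reindex (Equiv.prodAssoc V A B) (Equiv.prodAssoc V A B)
      (M ⊗ₖ (1 : Matrix B B ℂ))) * (ω ⊗ₖ ρ))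

noncomputable def margOp {V A : Type*} [Fintype V] [Fintype A] [DecidableEq V]
    (M : Matrix (V × A) (V × A) ℂ) (ρA : Matrix A A ℂ) : Matrix V V ℂ :=
  ptrace₂ (M * ((1 : Matrix V V ℂ) ⊗ₖ ρA))

noncomputable def piOp {A B : Type*} [Fintype A] [Fintype B] [DecidableEq B]
    (χ : Matrix A A ℂ) (ρ : Matrix (A × B) (A × B) ℂ) : Matrix B B ℂ :=
  ptrace₁ ((χ ⊗ₖ (1 : Matrix B B ℂ)) * ρ)

def TomoComplete {V X : Type*} [Fintype V] (ω : X → Matrix V V ℂ) : Prop :=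
  ∀ H : Matrix V V ℂ, H.IsHermitian → H ∈ Submodule.span ℝ (Set.range ω)

noncomputable def shiftX (d : ℕ) : Matrix (Fin d) (Fin d) ℂ :=
  Matrix.of fun i j => if (i : ℕ) = ((j : ℕ) + 1) % d then 1 else 0

noncomputable def clockZ (d : ℕ) : Matrix (Fin d) (Fin d) ℂ :=
  Matrix.of fun i j =>
    if i = j then Complex.exp (2 * (Real.pi : ℂ) * Complex.I * ((i : ℕ) : ℂ) / (d : ℂ)) else 0

noncomputable def HW (d : ℕ) (a : Fin d × Fin d) : Matrix (Fin d) (Fin d) ℂ :=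
  shiftX d ^ (a.1 : ℕ) * clockZ d ^ (a.2 : ℕ)

noncomputable def bellPOVM (d : ℕ) (a : Fin d × Fin d) :
    Matrix (Fin d × Fin d) (Fin d × Fin d) ℂ :=
  (HW d a ⊗ₖ (1 : Matrix (Fin d) (Fin d) ℂ)) * maxEnt d *
    ((HW d a)ᴴ ⊗ₖ (1 : Matrix (Fin d) (Fin d) ℂ))

noncomputable def negativity {A B : Type*} [Fintype A] [Fintype B]
    (ρ : Matrix (A × B) (A × B) ℂ) : ℝ :=
  sInf {t : ℝ | ∃ ρp ρm : Matrix (A × B) (A × B) ℂ,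
    ρ = ρp - ρm ∧ (ptranspose₁ ρp).PosSemidef ∧ (ptranspose₁ ρm).PosSemidef ∧
    t = (ρm.trace).re}

noncomputable def epsGen {A B : Type*} [Fintype A] [Fintype B]
    (ρ : Matrix (A × B) (A × B) ℂ) : ℝ :=
  sInf {r : ℝ | 0 ≤ r ∧ ∃ ρs : Matrix (A × B) (A × B) ℂ, IsState ρs ∧
    Separable ((((1 + r : ℝ) : ℂ))⁻¹ • (ρ + ((r : ℝ) : ℂ) • ρs))}

noncomputable def epsSep {A B : Type*} [Fintype A] [Fintype B]
    (ρ : Matrix (A × B) (A × B) ℂ) : ℝ :=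
  sInf {r : ℝ | 0 ≤ r ∧ ∃ ρs : Matrix (A × B) (A × B) ℂ, IsState ρs ∧ Separable ρs ∧
    Separable ((((1 + r : ℝ) : ℂ))⁻¹ • (ρ + ((r : ℝ) : ℂ) • ρs))}

noncomputable def epsR {A B : Type*} [Fintype A] [Fintype B] [DecidableEq A] [DecidableEq B]
    (ρ : Matrix (A × B) (A × B) ℂ) : ℝ :=
  sInf {r : ℝ | 0 ≤ r ∧
    Separable ((((1 + r : ℝ) : ℂ))⁻¹ •
      (ρ + ((r : ℝ) : ℂ) • ((Fintype.card (A × B) : ℂ)⁻¹ • (1 : Matrix (A × B) (A × B) ℂ))))}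

noncomputable def epsBSA {A B : Type*} [Fintype A] [Fintype B]
    (ρ : Matrix (A × B) (A × B) ℂ) : ℝ :=
  sInf {p : ℝ | 0 ≤ p ∧ p ≤ 1 ∧ ∃ ρs σS : Matrix (A × B) (A × B) ℂ,
    IsState ρs ∧ IsState σS ∧ Separable σS ∧
    ρ = ((p : ℝ) : ℂ) • ρs + (((1 - p : ℝ)) : ℂ) • σS}

noncomputable def tauGen {V B X ι : Type*} [Fintype V] [Fintype B] [Fintype ι]
    [DecidableEq V] [DecidableEq B]
    (ω : X → Matrix V V ℂ) (σ : ι → X → Matrix B B ℂ) : ℝ :=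
  sInf {r : ℝ | 0 ≤ r ∧ ∃ (m : ℕ) (ρs : Matrix (Fin m × B) (Fin m × B) ℂ)
      (N : ι → Matrix (V × Fin m) (V × Fin m) ℂ) (Ms : ι → Matrix (V × B) (V × B) ℂ),
      IsState ρs ∧ (∀ a, (N a).PosSemidef) ∧ ((∑ a, N a) = 1) ∧
      (∀ a, (Ms a).PosSemidef ∧ Separable (Ms a)) ∧
      (∀ a x, (((1 + r : ℝ) : ℂ))⁻¹ • (σ a x + ((r : ℝ) : ℂ) • teleA (N a) ρs (ω x)) =
        ptrace₁ (Ms a * (ω x ⊗ₖ (1 : Matrix B B ℂ)))) ∧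
      (∀ x, (∑ a, Ms a) = (1 : Matrix V V ℂ) ⊗ₖ
        ((((1 + r : ℝ) : ℂ))⁻¹ •
          ((∑ a, σ a x) + ((r : ℝ) : ℂ) • ∑ a, teleA (N a) ρs (ω x))))}

noncomputable def tauCl {V B X ι : Type*} [Fintype V] [Fintype B] [Fintype ι]
    [DecidableEq V] [DecidableEq B]
    (ω : X → Matrix V V ℂ) (σ : ι → X → Matrix B B ℂ) : ℝ :=
  sInf {r : ℝ | 0 ≤ r ∧ ∃ (Mb Ms : ι → Matrix (V × B) (V × B) ℂ),
    (∀ a, (Mb a).PosSemidef ∧ Separable (Mb a)) ∧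
    (∀ a, (Ms a).PosSemidef ∧ Separable (Ms a)) ∧
    (∀ x, (∑ a, Mb a) = (1 : Matrix V V ℂ) ⊗ₖ
      (∑ a, ptrace₁ (Mb a * (ω x ⊗ₖ (1 : Matrix B B ℂ))))) ∧
    (∀ a x, (((1 + r : ℝ) : ℂ))⁻¹ •
        (σ a x + ((r : ℝ) : ℂ) • ptrace₁ (Mb a * (ω x ⊗ₖ (1 : Matrix B B ℂ)))) =
      ptrace₁ (Ms a * (ω x ⊗ₖ (1 : Matrix B B ℂ)))) ∧
    (∀ x, (∑ a, Ms a) = (1 : Matrix V V ℂ) ⊗ₖ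
      ((((1 + r : ℝ) : ℂ))⁻¹ •
        ((∑ a, σ a x) + ((r : ℝ) : ℂ) •
          ∑ a, ptrace₁ (Mb a * (ω x ⊗ₖ (1 : Matrix B B ℂ))))))}

noncomputable def tauR {V B X ι : Type*} [Fintype V] [Fintype B] [Fintype ι]
    [DecidableEq V] [DecidableEq B]
    (ω : X → Matrix V V ℂ) (σ : ι → X → Matrix B B ℂ) : ℝ :=
  sInf {r : ℝ | 0 ≤ r ∧ ∃ (p : ι → ℝ) (Ms : ι → Matrix (V × B) (V × B) ℂ),
    (∀ a, 0 ≤ p a) ∧ ((∑ a, p a) = 1) ∧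
    (∀ a, (Ms a).PosSemidef ∧ Separable (Ms a)) ∧
    (∀ a x, (((1 + r : ℝ) : ℂ))⁻¹ •
        (σ a x + ((r * p a : ℝ) : ℂ) • ((Fintype.card B : ℂ)⁻¹ • (1 : Matrix B B ℂ))) =
      ptrace₁ (Ms a * (ω x ⊗ₖ (1 : Matrix B B ℂ)))) ∧
    (∀ x, (∑ a, Ms a) = (1 : Matrix V V ℂ) ⊗ₖ
      ((((1 + r : ℝ) : ℂ))⁻¹ •
        ((∑ a, σ a x) + ((r : ℝ) : ℂ) • ((Fintype.card B : ℂ)⁻¹ • (1 : Matrix B B ℂ)))))}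

noncomputable def TW {V B X ι : Type*} [Fintype V] [Fintype B] [Fintype ι]
    [DecidableEq B]
    (ω : X → Matrix V V ℂ) (σ : ι → X → Matrix B B ℂ) : ℝ :=
  sInf {p : ℝ | 0 ≤ p ∧ p ≤ 1 ∧ ∃ (Mt Mb : ι → Matrix (V × B) (V × B) ℂ),
    (∀ a, (Mb a).PosSemidef ∧ Separable (Mb a)) ∧
    (∀ a, (ptranspose₁ (Mt a)).PosSemidef) ∧
    (∀ x x', (∑ a, ptrace₁ (Mt a * (ω x ⊗ₖ (1 : Matrix B B ℂ)))) =
      ∑ a, ptrace₁ (Mt a * (ω x' ⊗ₖ (1 : Matrix B B ℂ)))) ∧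
    (∀ a x, σ a x = ptrace₁
      ((((p : ℝ) : ℂ) • Mt a + (((1 - p : ℝ)) : ℂ) • Mb a) * (ω x ⊗ₖ (1 : Matrix B B ℂ))))}

section Aux

variable {V A B : Type*} [Fintype V] [Fintype A] [Fintype B]

lemma chanOp_apply [DecidableEq V] [DecidableEq B]
    (M : Matrix (V × A) (V × A) ℂ) (ρ : Matrix (A × B) (A × B) ℂ)
    (v v' : V) (b b' : B) :
    chanOp M ρ (v, b) (v', b') = ∑ a, ∑ x, M (v, a) (v', x) * ρ (x, b) (a, b') := by
  simp [chanOp, ptraceMid, Matrix.mul_apply, Matrix.reindex_apply,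
    Matrix.submatrix_apply, Equiv.prodAssoc, Matrix.kroneckerMap_apply,
    Matrix.one_apply, Fintype.sum_prod_type, mul_ite, ite_mul, mul_zero, zero_mul,
    Finset.sum_ite_eq, Finset.sum_ite_eq']

lemma margOp_apply [DecidableEq V]
    (M : Matrix (V × A) (V × A) ℂ) (τ : Matrix A A ℂ) (v v' : V) :
    margOp M τ v v' = ∑ a, ∑ x, M (v, a) (v', x) * τ x a := by
  simp [margOp, ptrace₂, Matrix.mul_apply, Matrix.kroneckerMap_apply, Matrix.one_apply,
    Fintype.sum_prod_type, mul_ite, ite_mul, mul_zero, zero_mul,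
    Finset.sum_ite_eq, Finset.sum_ite_eq']

lemma chanOp_kron [DecidableEq V] [DecidableEq B]
    (M : Matrix (V × A) (V × A) ℂ) (τ : Matrix A A ℂ) (χ : Matrix B B ℂ) :
    chanOp M (τ ⊗ₖ χ) = margOp M τ ⊗ₖ χ := by
  ext ⟨v, b⟩ ⟨v', b'⟩
  simp only [chanOp_apply, margOp_apply, Matrix.kroneckerMap_apply, Finset.sum_mul]
  exact Finset.sum_congr rfl fun a _ => Finset.sum_congr rfl fun x _ => by ring

lemma chanOp_add [DecidableEq V] [DecidableEq B]
    (M : Matrix (V × A) (V × A) ℂ) (ρ₁ ρ₂ : Matrix (A × B) (A × B) ℂ) :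
    chanOp M (ρ₁ + ρ₂) = chanOp M ρ₁ + chanOp M ρ₂ := by
  ext ⟨v, b⟩ ⟨v', b'⟩
  simp [chanOp_apply, Matrix.add_apply, mul_add, Finset.sum_add_distrib]

lemma chanOp_smul [DecidableEq V] [DecidableEq B]
    (M : Matrix (V × A) (V × A) ℂ) (c : ℂ) (ρ : Matrix (A × B) (A × B) ℂ) :
    chanOp M (c • ρ) = c • chanOp M ρ := by
  ext ⟨v, b⟩ ⟨v', b'⟩
  simp only [chanOp_apply, Matrix.smul_apply, smul_eq_mul, Finset.mul_sum]
  refine Finset.sum_congr rfl fun a _ => Finset.sum_congr rfl fun x _ => by ring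

lemma chanOp_sum_smul [DecidableEq V] [DecidableEq B] {Λ : Type*} [Fintype Λ]
    (M : Matrix (V × A) (V × A) ℂ) (c : Λ → ℂ) (ρ : Λ → Matrix (A × B) (A × B) ℂ) :
    chanOp M (∑ l, c l • ρ l) = ∑ l, c l • chanOp M (ρ l) := by
  have h := map_sum (AddMonoidHom.mk' (fun τ => chanOp M τ) (chanOp_add M))
    (fun l => c l • ρ l) Finset.univ
  simp only [AddMonoidHom.mk'_apply] at h
  rw [h]
  exact Finset.sum_congr rfl fun l _ => chanOp_smul M (c l) (ρ l)

lemma sum_collapse₁ {α β : Type*} [Fintype α] [DecidableEq α] [Fintype β]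
    (v' : α) (f : α → β → ℂ) :
    ∑ y, ∑ z, (if y = v' then f y z else 0) = ∑ z, f v' z := by
  rw [Finset.sum_comm]
  simp

lemma sum_collapse₂ {α β : Type*} [Fintype α] [DecidableEq α] [Fintype β]
    (v' : α) (f : α → β → ℂ) :
    ∑ y, ∑ z, (if v' = y then f y z else 0) = ∑ z, f v' z := by
  rw [Finset.sum_comm]
  simp

lemma ptrace₂_posSemidef [DecidableEq A]
    {N : Matrix (V × A) (V × A) ℂ} (hN : N.PosSemidef) : (ptrace₂ N).PosSemidef := by
  refine Matrix.posSemidef_iff_dotProduct_mulVec.mpr ⟨?_, ?_⟩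
  · ext v v'
    simp only [ptrace₂, Matrix.conjTranspose_apply, Matrix.of_apply, star_sum]
    refine Finset.sum_congr rfl fun bb _ => ?_
    have := congrFun (congrFun hN.1 (v, bb)) (v', bb)
    simpa [Matrix.conjTranspose_apply] using this
  · intro x
    have hR : ∀ bb : A, star (fun p : V × A => if p.2 = bb then x p.1 else 0) ⬝ᵥ
          N *ᵥ (fun p : V × A => if p.2 = bb then x p.1 else 0)
        = ∑ v, ∑ v', star (x v) * (N (v, bb) (v', bb) * x v') := by
      intro bb
      simp only [dotProduct, Matrix.mulVec, Pi.star_apply, Fintype.sum_prod_type,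
        apply_ite, star_zero, ite_mul, mul_ite, mul_zero, zero_mul,
        Finset.sum_ite_eq, Finset.sum_ite_eq', Finset.mem_univ, if_true, Finset.mul_sum]
      exact Finset.sum_congr rfl fun v _ => sum_collapse₁ bb _
    have hL : star x ⬝ᵥ (ptrace₂ N) *ᵥ x
        = ∑ v, ∑ v', ∑ bb, star (x v) * (N (v, bb) (v', bb) * x v') := by
      simp only [dotProduct, Matrix.mulVec, ptrace₂, Matrix.of_apply, Pi.star_apply,
        Finset.mul_sum, Finset.sum_mul]
    have key : star x ⬝ᵥ (ptrace₂ N) *ᵥ x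
        = ∑ bb : A, star (fun p : V × A => if p.2 = bb then x p.1 else 0) ⬝ᵥ
            N *ᵥ (fun p : V × A => if p.2 = bb then x p.1 else 0) := by
      rw [hL]
      calc (∑ v, ∑ v', ∑ bb, star (x v) * (N (v, bb) (v', bb) * x v'))
          = ∑ v, ∑ bb, ∑ v', star (x v) * (N (v, bb) (v', bb) * x v') :=
            Finset.sum_congr rfl fun v _ => Finset.sum_comm
        _ = ∑ bb, ∑ v, ∑ v', star (x v) * (N (v, bb) (v', bb) * x v') :=
            Finset.sum_comm
        _ = _ := (Finset.sum_congr rfl fun bb _ => (hR bb).symm)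
    rw [key]
    exact Finset.sum_nonneg fun bb _ => hN.dotProduct_mulVec_nonneg _

lemma ptrace₂_cyc [DecidableEq V]
    (X : Matrix (V × A) (V × A) ℂ) (s : Matrix A A ℂ) :
    ptrace₂ (X * ((1 : Matrix V V ℂ) ⊗ₖ s)) = ptrace₂ (((1 : Matrix V V ℂ) ⊗ₖ s) * X) := by
  ext v v'
  simp only [ptrace₂, Matrix.of_apply, Matrix.mul_apply, Fintype.sum_prod_type,
    Matrix.kroneckerMap_apply, Matrix.one_apply, ite_mul, mul_ite, mul_zero, zero_mul,
    one_mul, mul_one, Finset.sum_ite_eq, Finset.sum_ite_eq', Finset.mem_univ, if_true]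
  simp only [sum_collapse₁, sum_collapse₂]
  rw [Finset.sum_comm]
  exact Finset.sum_congr rfl fun a _ => Finset.sum_congr rfl fun bb _ => by ring

lemma one_kron_herm [DecidableEq V] {s : Matrix A A ℂ} (hs : s.IsHermitian) :
    ((1 : Matrix V V ℂ) ⊗ₖ s)ᴴ = (1 : Matrix V V ℂ) ⊗ₖ s := by
  ext ⟨v, a⟩ ⟨v', a'⟩
  simp only [Matrix.conjTranspose_apply, Matrix.kroneckerMap_apply, Matrix.one_apply,
    star_mul', apply_ite, star_one, star_zero]
  rw [← Matrix.conjTranspose_apply, hs.eq]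
  by_cases h : v' = v <;> by_cases h' : v = v' <;> simp_all

open scoped MatrixOrder in
lemma margOp_posSemidef [DecidableEq V] [DecidableEq A]
    {M : Matrix (V × A) (V × A) ℂ} (hM : M.PosSemidef)
    {ρA : Matrix A A ℂ} (hρA : ρA.PosSemidef) : (margOp M ρA).PosSemidef := by
  set s := CFC.sqrt ρA with hsdef
  have hs : s * s = ρA := CFC.sqrt_mul_sqrt_self ρA hρA.nonneg
  have hsH : s.IsHermitian := (CFC.sqrt_nonneg ρA).posSemidef.1
  have h1 : ((1 : Matrix V V ℂ) ⊗ₖ s) * ((1 : Matrix V V ℂ) ⊗ₖ s)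
      = (1 : Matrix V V ℂ) ⊗ₖ ρA := by
    rw [← Matrix.mul_kronecker_mul, one_mul, hs]
  have key : margOp M ρA = ptrace₂ ((((1 : Matrix V V ℂ) ⊗ₖ s)ᴴ * M) *
      ((1 : Matrix V V ℂ) ⊗ₖ s)) := by
    rw [margOp, ← h1, ← mul_assoc, ptrace₂_cyc, one_kron_herm hsH, mul_assoc,
      ← mul_assoc]
  rw [key]
  have hpsd : ((((1 : Matrix V V ℂ) ⊗ₖ s)ᴴ * M) * ((1 : Matrix V V ℂ) ⊗ₖ s)).PosSemidef := by
    have := hM.conjTranspose_mul_mul_same ((1 : Matrix V V ℂ) ⊗ₖ s)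
    simpa [mul_assoc] using this
  exact ptrace₂_posSemidef hpsd

end Aux

/-- a separable shared state yields separable channel operators of the
explicit form `Σ_λ p_λ M_{a|λ} ⊗ ρ^B_λ`, with each `M_{a|λ}` positive semidefinite. -/
theorem separable_state_channel_operators {V A B ι Λ : Type*}
    [Fintype V] [Fintype A] [Fintype B] [Fintype ι] [Fintype Λ]
    [DecidableEq V] [DecidableEq A] [DecidableEq B]
    (ρ : Matrix (A × B) (A × B) ℂ) (hρ : IsState ρ)
    (p : Λ → ℝ) (hp : ∀ l, 0 ≤ p l)
    (ρA : Λ → Matrix A A ℂ) (ρB : Λ → Matrix B B ℂ)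
    (hρA : ∀ l, IsState (ρA l)) (hρB : ∀ l, IsState (ρB l))
    (hsep : ρ = ∑ l, ((p l : ℝ) : ℂ) • (ρA l ⊗ₖ ρB l))
    (M : ι → Matrix (V × A) (V × A) ℂ)
    (hM : ∀ a, (M a).PosSemidef) (hMsum : (∑ a, M a) = 1) :
    (∀ a, chanOp (M a) ρ = ∑ l, ((p l : ℝ) : ℂ) • (margOp (M a) (ρA l) ⊗ₖ ρB l)) ∧
      (∀ a l, (margOp (M a) (ρA l)).PosSemidef) := by
  constructor
  · intro a
    rw [hsep, chanOp_sum_smul]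
    exact Finset.sum_congr rfl fun l _ => by rw [chanOp_kron]
  · intro a l
    exact margOp_posSemidef (hM a) (hρA l).1

end Tele
end

section
/- (Local entanglement-swapping lemma.) Let V = C^d, let M ≥ 0 be an operator on V ⊗ H_A, let ρ be a state on H_A ⊗ H_B, and let ω be a state on V. Define p = tr[(1_V ⊗ M^{V₁A} ⊗ 1_B)(Φ+^{VV₁} ⊗ ρ^{AB})], where V₁ is a second copy of C^d, and, when p > 0, ρ' = (1/p) tr_{V₁A}[(1_V ⊗ M^{V₁A} ⊗ 1_B)(Φ+^{VV₁} ⊗ ρ^{AB})], an operator on V ⊗ H_B. Then ρ' is a positive semidefinite operator of trace one, and tr_{VA'}[(M' ⊗ 1_B)(ω ⊗ ρ)] = d² p · tr_{VV'}[(Φ+^{VV'} ⊗ 1_B)(ω ⊗ ρ')], i.e. every element of a teleportation assemblage arising from measurement M on state ρ also arises, up to the factor d² p, by projecting onto the maximally entangled state Φ+ applied to the state ρ'. -/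
open Matrix ComplexOrder
open scoped Kronecker

namespace Tele

lemma sum_swap4 {ι₁ ι₂ ι₃ ι₄ : Type*} [Fintype ι₁] [Fintype ι₂] [Fintype ι₃] [Fintype ι₄]
    (f : ι₁ → ι₂ → ι₃ → ι₄ → ℂ) :
    ∑ a, ∑ b, ∑ c, ∑ d, f a b c d = ∑ c, ∑ d, ∑ a, ∑ b, f a b c d :=
  calc ∑ a, ∑ b, ∑ c, ∑ d, f a b c d
      = ∑ a, ∑ c, ∑ b, ∑ d, f a b c d :=
        Finset.sum_congr rfl fun _ _ => Finset.sum_comm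
    _ = ∑ c, ∑ a, ∑ b, ∑ d, f a b c d := Finset.sum_comm
    _ = ∑ c, ∑ a, ∑ d, ∑ b, f a b c d :=
        Finset.sum_congr rfl fun _ _ => Finset.sum_congr rfl fun _ _ => Finset.sum_comm
    _ = ∑ c, ∑ d, ∑ a, ∑ b, f a b c d :=
        Finset.sum_congr rfl fun _ _ => Finset.sum_comm

lemma posSemidef_smul_of_nonneg {n : Type*} [Fintype n] {c : ℂ} (hc : 0 ≤ c)
    {M : Matrix n n ℂ} (hM : M.PosSemidef) : (c • M).PosSemidef := by
  constructor
  · have hst : star c = c := by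
      rw [Complex.star_def, Complex.conj_eq_iff_im]
      exact (Complex.le_def.mp hc).2.symm
    rw [Matrix.IsHermitian, Matrix.conjTranspose_smul, hst, hM.1.eq]
  · intro x
    exact (hM.smul hc).2 x

/-- local entanglement-swapping lemma: the post-measurement operator ρ' is a
state, and the assemblage element from (M, ρ) equals d²p times the one from (Φ+, ρ'). -/
theorem local_entanglement_swapping (d : ℕ) (hd : 1 ≤ d) {A B : Type*}
    [Fintype A] [Fintype B] [DecidableEq A] [DecidableEq B]
    (M : Matrix (Fin d × A) (Fin d × A) ℂ) (hM : M.PosSemidef)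
    (ρ : Matrix (A × B) (A × B) ℂ) (hρ : IsState ρ)
    (ω : Matrix (Fin d) (Fin d) ℂ) (hω : IsState ω)
    (p : ℂ)
    (hp : p = (((1 : Matrix (Fin d) (Fin d) ℂ) ⊗ₖ
          (Matrix.reindex (Equiv.prodAssoc (Fin d) A B) (Equiv.prodAssoc (Fin d) A B)
            (M ⊗ₖ (1 : Matrix B B ℂ)))) *
        (Matrix.reindex (Equiv.prodAssoc (Fin d) (Fin d) (A × B))
          (Equiv.prodAssoc (Fin d) (Fin d) (A × B)) (maxEnt d ⊗ₖ ρ))).trace)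
    (hppos : 0 < p)
    (ρ' : Matrix (Fin d × B) (Fin d × B) ℂ)
    (hρ' : ρ' = p⁻¹ • ptraceV₁A (((1 : Matrix (Fin d) (Fin d) ℂ) ⊗ₖ
          (Matrix.reindex (Equiv.prodAssoc (Fin d) A B) (Equiv.prodAssoc (Fin d) A B)
            (M ⊗ₖ (1 : Matrix B B ℂ)))) *
        (Matrix.reindex (Equiv.prodAssoc (Fin d) (Fin d) (A × B))
          (Equiv.prodAssoc (Fin d) (Fin d) (A × B)) (maxEnt d ⊗ₖ ρ)))) :
    ρ'.PosSemidef ∧ ρ'.trace = 1 ∧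
      teleA M ρ ω = ((d : ℂ) ^ 2 * p) • teleA (maxEnt d) ρ' ω := by
  have hd0 : (d : ℂ) ≠ 0 := Nat.cast_ne_zero.mpr (by omega)
  have hp0 : p ≠ 0 := ne_of_gt hppos
  have hdnn : (0 : ℂ) ≤ (d : ℂ)⁻¹ := by
    rw [show ((d : ℂ))⁻¹ = (((d : ℝ)⁻¹ : ℝ) : ℂ) by push_cast; ring]
    exact Complex.zero_le_real.mpr (by positivity)
  have hpre : p = ((p.re : ℝ) : ℂ) := by
    apply Complex.ext
    · simp
    · simpa using ((Complex.lt_def.mp hppos).2).symm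
  have hpinv_nn : (0 : ℂ) ≤ p⁻¹ := by
    have hpre_pos : 0 < p.re := by simpa using (Complex.lt_def.mp hppos).1
    rw [hpre, ← Complex.ofReal_inv]
    exact Complex.zero_le_real.mpr (inv_nonneg.mpr hpre_pos.le)
  set N : Matrix (Fin d × Fin d × A × B) (Fin d × Fin d × A × B) ℂ :=
    (((1 : Matrix (Fin d) (Fin d) ℂ) ⊗ₖ
          (Matrix.reindex (Equiv.prodAssoc (Fin d) A B) (Equiv.prodAssoc (Fin d) A B)
            (M ⊗ₖ (1 : Matrix B B ℂ)))) *
        (Matrix.reindex (Equiv.prodAssoc (Fin d) (Fin d) (A × B))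
          (Equiv.prodAssoc (Fin d) (Fin d) (A × B)) (maxEnt d ⊗ₖ ρ))) with hNdef
  have hN : ∀ (v v₁ v' v₁' : Fin d) (a a' : A) (b b' : B),
      N (v, v₁, a, b) (v', v₁', a', b')
      = if v' = v₁' then (d : ℂ)⁻¹ * ∑ c, M (v₁, a) (v, c) * ρ (c, b) (a', b') else 0 := by
    intro v v₁ v' v₁' a a' b b'
    simp [hNdef, Matrix.mul_apply, Fintype.sum_prod_type, Matrix.one_apply, maxEnt,
      ite_and, mul_ite, ite_mul, mul_comm, mul_assoc, mul_left_comm, Finset.mul_sum]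
  have hσ : ∀ (v : Fin d) (b : B) (v' : Fin d) (b' : B),
      ptraceV₁A N (v, b) (v', b')
      = (d : ℂ)⁻¹ * ∑ a, ∑ c, M (v', a) (v, c) * ρ (c, b) (a, b') := by
    intro v b v' b'
    simp [ptraceV₁A, hN, Finset.mul_sum]
  have hpval : p = (d : ℂ)⁻¹ * ∑ v, ∑ b, ∑ a, ∑ c, M (v, a) (v, c) * ρ (c, b) (a, b) := by
    rw [hp]
    simp [Matrix.trace, Matrix.diag, Fintype.sum_prod_type, hN, Finset.mul_sum]
    exact Finset.sum_congr rfl fun v _ => Finset.sum_comm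
  have hρ'app : ∀ (u v : Fin d) (b b' : B),
      ρ' (u, b) (v, b')
      = p⁻¹ * ((d : ℂ)⁻¹ * ∑ a, ∑ c, M (v, a) (u, c) * ρ (c, b) (a, b')) := by
    intro u v b b'
    rw [hρ']
    simp [Matrix.smul_apply, hσ u b v b']
  obtain ⟨C, hC⟩ : ∃ C : Matrix (Fin d × A) (Fin d × A) ℂ, M = Cᴴ * C := by
    open scoped MatrixOrder in
    obtain ⟨B', hB'⟩ := CStarAlgebra.nonneg_iff_eq_star_mul_self.mp hM.nonneg
    exact ⟨B', hB'⟩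
  obtain ⟨D, hD⟩ : ∃ D : Matrix (A × B) (A × B) ℂ, ρ = Dᴴ * D := by
    open scoped MatrixOrder in
    obtain ⟨B', hB'⟩ := CStarAlgebra.nonneg_iff_eq_star_mul_self.mp hρ.1.nonneg
    exact ⟨B', hB'⟩
  have hσH : ptraceV₁A N = (d : ℂ)⁻¹ •
      ((Matrix.of fun (pp : Fin d × B) (kj : (Fin d × A) × (A × B)) =>
        ∑ c, C kj.1 (pp.1, c) * star (D kj.2 (c, pp.2))) *
       (Matrix.of fun (pp : Fin d × B) (kj : (Fin d × A) × (A × B)) =>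
        ∑ c, C kj.1 (pp.1, c) * star (D kj.2 (c, pp.2)))ᴴ) := by
    ext ⟨v, b⟩ ⟨v', b'⟩
    rw [hσ v b v' b', Matrix.smul_apply, smul_eq_mul]
    congr 1
    rw [hC, hD]
    simp only [Matrix.mul_apply, Matrix.conjTranspose_apply, Matrix.of_apply,
      Finset.sum_mul, Finset.mul_sum, star_sum, star_mul', star_star]
    rw [sum_swap4 (f := fun a c j k =>
      star (C k (v', a)) * C k (v, c) * (star (D j (c, b)) * D j (a, b'))),
      Finset.sum_comm]
    conv_rhs => rw [Fintype.sum_prod_type]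
    refine Finset.sum_congr rfl fun k _ => Finset.sum_congr rfl fun j _ =>
      Finset.sum_congr rfl fun a _ => Finset.sum_congr rfl fun c _ => by ring
  have hPSD : ρ'.PosSemidef := by
    rw [hρ', hσH]
    exact posSemidef_smul_of_nonneg hpinv_nn
      (posSemidef_smul_of_nonneg hdnn (Matrix.posSemidef_self_mul_conjTranspose _))
  have htrσ : (ptraceV₁A N).trace = p := by
    rw [hpval]
    simp only [Matrix.trace, Matrix.diag_apply, Fintype.sum_prod_type, Finset.mul_sum]
    exact Finset.sum_congr rfl fun v _ => Finset.sum_congr rfl fun b _ => by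
      rw [hσ v b v b]; simp only [Finset.mul_sum]
  have htr : ρ'.trace = 1 := by
    rw [hρ', Matrix.trace_smul, htrσ, smul_eq_mul, inv_mul_cancel₀ hp0]
  refine ⟨hPSD, htr, ?_⟩
  have hL : ∀ b b' : B, teleA M ρ ω b b'
      = ∑ v, ∑ a, ∑ u, ∑ c, M (v, a) (u, c) * ω u v * ρ (c, b) (a, b') := by
    intro b b'
    simp [teleA, ptraceVA, Matrix.mul_apply, Fintype.sum_prod_type, Matrix.one_apply,
      ite_and, mul_ite, ite_mul, mul_comm, mul_assoc, mul_left_comm, Finset.mul_sum]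
  have hR : ∀ b b' : B, teleA (maxEnt d) ρ' ω b b'
      = (d : ℂ)⁻¹ * ∑ v, ∑ u, ω u v * ρ' (u, b) (v, b') := by
    intro b b'
    simp [teleA, ptraceVA, maxEnt, Matrix.mul_apply, Fintype.sum_prod_type, Matrix.one_apply,
      ite_and, mul_ite, ite_mul, mul_comm, mul_assoc, mul_left_comm, Finset.mul_sum]
  ext b b'
  rw [Matrix.smul_apply, hL b b', hR b b', smul_eq_mul]
  simp only [hρ'app, Finset.mul_sum]
  refine Finset.sum_congr rfl fun v _ => ?_
  rw [Finset.sum_comm]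
  refine Finset.sum_congr rfl fun u _ => ?_
  refine Finset.sum_congr rfl fun a _ => Finset.sum_congr rfl fun c _ => ?_
  field_simp

end Tele
end

section
/- Let {σ_{a|ω_x}} be the teleportation assemblage arising from a shared state ρ^{AB}, a POVM {M_a^{VA}}, and input states {ω_x}. Let ν be the optimal value of the following optimization: minimize Σ_a tr[σ⁻_{a|ω_x}] over positive semidefinite operators M*_{a,±} on V ⊗ H_B and Hermitian operators ρ_± on H_B, subject to σ_{a|ω_x} = σ⁺_{a|ω_x} − σ⁻_{a|ω_x} and σ^±_{a|ω_x} = tr_V[M*_{a,±}(ω_x ⊗ 1_B)] for all a, x, and Σ_a M*_{a,±} = 1_V ⊗ ρ_±. Then ν ≤ N(ρ^{AB}); that is, the optimal value of this optimization is a lower bound on the entanglement negativity of the shared state. -/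
open Matrix ComplexOrder
open scoped Kronecker

namespace Tele

section Aux

set_option linter.unusedSectionVars false

lemma sum_comm₃ {ι₁ ι₂ ι₃ M : Type*} [Fintype ι₁] [Fintype ι₂] [Fintype ι₃]
    [AddCommMonoid M] (f : ι₁ → ι₂ → ι₃ → M) :
    ∑ a, ∑ b, ∑ c, f a b c = ∑ b, ∑ c, ∑ a, f a b c :=
  calc ∑ a, ∑ b, ∑ c, f a b c
      = ∑ b, ∑ a, ∑ c, f a b c := Finset.sum_comm
    _ = ∑ b, ∑ c, ∑ a, f a b c := Finset.sum_congr rfl fun b _ => Finset.sum_comm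

lemma sum_comm₄ {ι₁ ι₂ ι₃ ι₄ M : Type*} [Fintype ι₁] [Fintype ι₂] [Fintype ι₃] [Fintype ι₄]
    [AddCommMonoid M] (f : ι₁ → ι₂ → ι₃ → ι₄ → M) :
    ∑ a, ∑ b, ∑ c, ∑ d, f a b c d = ∑ c, ∑ d, ∑ a, ∑ b, f a b c d :=
  calc ∑ a, ∑ b, ∑ c, ∑ d, f a b c d
      = ∑ a, ∑ c, ∑ b, ∑ d, f a b c d :=
        Finset.sum_congr rfl fun a _ => Finset.sum_comm
    _ = ∑ c, ∑ a, ∑ b, ∑ d, f a b c d := Finset.sum_comm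
    _ = ∑ c, ∑ a, ∑ d, ∑ b, f a b c d :=
        Finset.sum_congr rfl fun c _ => Finset.sum_congr rfl fun a _ => Finset.sum_comm
    _ = ∑ c, ∑ d, ∑ a, ∑ b, f a b c d :=
        Finset.sum_congr rfl fun c _ => Finset.sum_comm

variable {V A B : Type*} [Fintype V] [Fintype A] [Fintype B]

noncomputable def contr (M : Matrix (V × A) (V × A) ℂ) (X : Matrix (A × B) (A × B) ℂ) :
    Matrix (V × B) (V × B) ℂ :=
  Matrix.of fun p q => ∑ α, ∑ α', M (p.1, α) (q.1, α') * X (α, p.2) (α', q.2)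

lemma contr_posSemidef {M : Matrix (V × A) (V × A) ℂ} {X : Matrix (A × B) (A × B) ℂ}
    (hM : M.PosSemidef) (hX : X.PosSemidef) : (contr M X).PosSemidef := by
  classical
  obtain ⟨P, hP⟩ : ∃ P : Matrix (V × A) (V × A) ℂ, M = Pᴴ * P := by
    open scoped MatrixOrder Matrix.Norms.L2Operator in
    exact CStarAlgebra.nonneg_iff_eq_star_mul_self.mp hM.nonneg
  obtain ⟨Q, hQ⟩ : ∃ Q : Matrix (A × B) (A × B) ℂ, X = Qᴴ * Q := by
    open scoped MatrixOrder Matrix.Norms.L2Operator in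
    exact CStarAlgebra.nonneg_iff_eq_star_mul_self.mp hX.nonneg
  have key : contr M X =
      (Matrix.of fun (j : (V × A) × (A × B)) (p : V × B) =>
        ∑ α, P j.1 (p.1, α) * Q j.2 (α, p.2))ᴴ *
      (Matrix.of fun (j : (V × A) × (A × B)) (p : V × B) =>
        ∑ α, P j.1 (p.1, α) * Q j.2 (α, p.2)) := by
    ext ⟨v, b⟩ ⟨v', b'⟩
    simp only [contr, hP, hQ, Matrix.of_apply, mul_apply, conjTranspose_apply]
    conv_rhs => rw [Fintype.sum_prod_type]
    simp only [star_sum, star_mul', Finset.sum_mul, Finset.mul_sum]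
    rw [sum_comm₄ (f := fun (α : A) (α' : A) (l : A × B) (k : V × A) =>
      star (P k (v, α)) * P k (v', α') * (star (Q l (α, b)) * Q l (α', b')))]
    refine Eq.trans Finset.sum_comm ?_
    refine Finset.sum_congr rfl fun k _ => Finset.sum_congr rfl fun l _ => ?_
    refine Eq.trans Finset.sum_comm ?_
    refine Finset.sum_congr rfl fun α' _ => Finset.sum_congr rfl fun α _ => ?_
    ring
  rw [key]
  exact posSemidef_conjTranspose_mul_self _

lemma contr_sub (M : Matrix (V × A) (V × A) ℂ) (X Y : Matrix (A × B) (A × B) ℂ) :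
    contr M (X - Y) = contr M X - contr M Y := by
  ext p q
  simp [contr, mul_sub, Finset.sum_sub_distrib]

lemma sum_contr {ι : Type*} [Fintype ι] (M : ι → Matrix (V × A) (V × A) ℂ)
    (X : Matrix (A × B) (A × B) ℂ) :
    (∑ a, contr (M a) X) = contr (∑ a, M a) X := by
  ext p q
  simp only [Matrix.sum_apply, contr, Matrix.of_apply, Finset.sum_mul]
  exact sum_comm₃ (f := fun a α α' => M a (p.1, α) (q.1, α') * X (α, p.2) (α', q.2))

lemma contr_one [DecidableEq V] [DecidableEq A] (X : Matrix (A × B) (A × B) ℂ) :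
    contr (1 : Matrix (V × A) (V × A) ℂ) X = (1 : Matrix V V ℂ) ⊗ₖ ptrace₁ X := by
  ext ⟨v, b⟩ ⟨v', b'⟩
  simp only [contr, Matrix.of_apply, kroneckerMap_apply, ptrace₁, one_apply, Prod.mk.injEq]
  by_cases h : v = v'
  · subst h
    simp only [if_pos rfl, one_mul, true_and]
    rw [Finset.sum_comm]
    simp [Finset.sum_ite_eq]
  · simp [h, Prod.ext_iff]

lemma ptrace₁_ptranspose₁ (X : Matrix (A × B) (A × B) ℂ) :
    ptrace₁ (ptranspose₁ X) = ptrace₁ X := rfl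

lemma ptranspose₁_ptranspose₁ (X : Matrix (A × B) (A × B) ℂ) :
    ptranspose₁ (ptranspose₁ X) = X := rfl

lemma ptranspose₁_sub (X Y : Matrix (A × B) (A × B) ℂ) :
    ptranspose₁ (X - Y) = ptranspose₁ X - ptranspose₁ Y := rfl

lemma ptranspose₁_isHermitian {X : Matrix (A × B) (A × B) ℂ} (hX : X.IsHermitian) :
    (ptranspose₁ X).IsHermitian := by
  ext ⟨a, b⟩ ⟨a', b'⟩
  simp only [conjTranspose_apply, ptranspose₁, Matrix.of_apply]
  exact congrFun (congrFun hX (a', b)) (a, b')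

lemma ptrace₁_isHermitian {X : Matrix (A × B) (A × B) ℂ} (hX : X.IsHermitian) :
    (ptrace₁ X).IsHermitian := by
  ext b b'
  simp only [conjTranspose_apply, ptrace₁, Matrix.of_apply, star_sum]
  exact Finset.sum_congr rfl fun a _ => hX.apply (a, b) (a, b')

lemma trace_ptrace₁ (X : Matrix (A × B) (A × B) ℂ) :
    (ptrace₁ X).trace = X.trace := by
  simp only [Matrix.trace, ptrace₁, Matrix.diag, Matrix.of_apply, Fintype.sum_prod_type]
  exact Finset.sum_comm

lemma isHermitian_exists_posSemidef_sub {n : Type*} [Fintype n] [DecidableEq n]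
    {H : Matrix n n ℂ} (hH : H.IsHermitian) :
    ∃ P N : Matrix n n ℂ, P.PosSemidef ∧ N.PosSemidef ∧ H = P - N := by
  classical
  set U : Matrix n n ℂ := (Matrix.IsHermitian.eigenvectorUnitary hH : Matrix n n ℂ)
  refine ⟨U * Matrix.diagonal (fun i => ((max (hH.eigenvalues i) 0 : ℝ) : ℂ)) * Uᴴ,
    U * Matrix.diagonal (fun i => ((max (-(hH.eigenvalues i)) 0 : ℝ) : ℂ)) * Uᴴ, ?_, ?_, ?_⟩
  · exact (Matrix.PosSemidef.diagonal (fun i => by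
      simpa using Complex.zero_le_real.mpr (le_max_right _ _))).mul_mul_conjTranspose_same U
  · exact (Matrix.PosSemidef.diagonal (fun i => by
      simpa using Complex.zero_le_real.mpr (le_max_right _ _))).mul_mul_conjTranspose_same U
  · rw [← Matrix.sub_mul, ← Matrix.mul_sub, Matrix.diagonal_sub]
    have h2 : (fun i => (((max (hH.eigenvalues i) 0 : ℝ)) : ℂ) -
        (((max (-(hH.eigenvalues i)) 0 : ℝ)) : ℂ)) =
        fun i => ((hH.eigenvalues i : ℝ) : ℂ) := by
      funext i
      rw [← Complex.ofReal_sub, max_zero_sub_max_neg_zero_eq_self]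
    rw [h2]
    exact hH.spectral_theorem

end Aux

section Aux2
variable {V A B : Type*} [Fintype V] [Fintype A] [Fintype B]

lemma ptrace₁_sub (X Y : Matrix (V × B) (V × B) ℂ) :
    ptrace₁ (X - Y) = ptrace₁ X - ptrace₁ Y := by
  ext b b'
  simp [ptrace₁, Finset.sum_sub_distrib]

lemma teleA_contr [DecidableEq B]
    (M : Matrix (V × A) (V × A) ℂ) (ρ : Matrix (A × B) (A × B) ℂ) (ω : Matrix V V ℂ) :
    teleA M ρ ω = ptrace₁ (contr M (ptranspose₁ ρ) * (ω ⊗ₖ (1 : Matrix B B ℂ))) := by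
  classical
  ext b b'
  simp only [teleA, ptraceVA, ptrace₁, contr, ptranspose₁, Matrix.of_apply, mul_apply,
    Matrix.reindex_apply, submatrix_apply, kroneckerMap_apply, Equiv.prodAssoc_symm_apply,
    one_apply, Fintype.sum_prod_type, mul_ite, ite_mul, mul_zero, zero_mul, mul_one, one_mul,
    Finset.sum_ite_eq, Finset.sum_ite_eq', Finset.mem_univ, if_true, Finset.sum_mul,
    Finset.mul_sum]
  refine Finset.sum_congr rfl fun v _ => ?_
  refine Eq.trans Finset.sum_comm ?_
  refine Finset.sum_congr rfl fun v'' _ => ?_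
  refine Finset.sum_congr rfl fun α _ => Finset.sum_congr rfl fun α' _ => ?_
  ring

lemma posSemidef_sum {ι : Type*} [Fintype ι] {n : Type*} [Fintype n]
    (f : ι → Matrix n n ℂ) (hf : ∀ a, (f a).PosSemidef) : (∑ a, f a).PosSemidef := by
  classical
  refine Finset.sum_induction f _ (fun a b ha hb => ha.add hb) ?_ (fun a _ => hf a)
  exact ⟨by simp [Matrix.IsHermitian], fun x => by simp⟩

lemma trace_re_nonneg {n : Type*} [Fintype n] [DecidableEq n] {M : Matrix n n ℂ}
    (hM : M.PosSemidef) : 0 ≤ M.trace.re := by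
  have h : ∀ i, 0 ≤ (M i i).re := by
    intro i
    have h1 := hM.re_dotProduct_nonneg (Pi.single i 1)
    have h2 : dotProduct (star (Pi.single i 1)) (M *ᵥ Pi.single i 1) = M i i := by
      simp [dotProduct, Matrix.mulVec, Pi.single_apply, Finset.sum_ite_eq,
        apply_ite, Finset.mul_sum]
    rw [h2] at h1
    exact h1
  rw [Matrix.trace]
  rw [Complex.re_sum]
  exact Finset.sum_nonneg fun i _ => h i

end Aux2

/-- the optimal value of the negativity-estimation SDP over the teleportation
data is a lower bound on the entanglement negativity of the shared state. -/
theorem negativity_lower_bound {A B ι X : Type*}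
    [Fintype A] [Fintype B] [Fintype ι] [DecidableEq A] [DecidableEq B]
    (d : ℕ) (hd : 1 ≤ d)
    (ρ : Matrix (A × B) (A × B) ℂ) (hρ : IsState ρ)
    (M : ι → Matrix (Fin d × A) (Fin d × A) ℂ)
    (hM : ∀ a, (M a).PosSemidef) (hMsum : (∑ a, M a) = 1)
    (ω : X → Matrix (Fin d) (Fin d) ℂ) (hω : ∀ x, IsState (ω x)) :
    sInf {t : ℝ | ∃ (Mp Mm : ι → Matrix (Fin d × B) (Fin d × B) ℂ) (ρp ρm : Matrix B B ℂ),
        (∀ a, (Mp a).PosSemidef) ∧ (∀ a, (Mm a).PosSemidef) ∧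
        ρp.IsHermitian ∧ ρm.IsHermitian ∧
        (∀ a x, teleA (M a) ρ (ω x) =
          ptrace₁ (Mp a * (ω x ⊗ₖ (1 : Matrix B B ℂ))) -
            ptrace₁ (Mm a * (ω x ⊗ₖ (1 : Matrix B B ℂ)))) ∧
        (∑ a, Mp a) = (1 : Matrix (Fin d) (Fin d) ℂ) ⊗ₖ ρp ∧
        (∑ a, Mm a) = (1 : Matrix (Fin d) (Fin d) ℂ) ⊗ₖ ρm ∧
        t = (ρm.trace).re} ≤ negativity ρ := by
  classical
  have hd0 : (0 : ℕ) < d := hd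
  apply csInf_le_csInf
  · -- bounded below by 0
    refine ⟨0, fun t ht => ?_⟩
    obtain ⟨Mp, Mm, ρp, ρm, hMp, hMm, hρpH, hρmH, hdec, hsp, hsm, ht⟩ := ht
    have hsumPSD : (∑ a, Mm a).PosSemidef := posSemidef_sum _ hMm
    rw [hsm] at hsumPSD
    have hρmPSD : ρm.PosSemidef := by
      have hsub := hsumPSD.submatrix (fun b : B => ((⟨0, hd0⟩ : Fin d), b))
      have : ((1 : Matrix (Fin d) (Fin d) ℂ) ⊗ₖ ρm).submatrix
          (fun b : B => ((⟨0, hd0⟩ : Fin d), b)) (fun b : B => ((⟨0, hd0⟩ : Fin d), b)) = ρm := by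
        ext b b'
        simp [Matrix.submatrix_apply, Matrix.one_apply]
      rwa [this] at hsub
    rw [ht]
    exact trace_re_nonneg hρmPSD
  · -- negativity feasible set nonempty
    obtain ⟨P, N, hP, hN, hPN⟩ :=
      isHermitian_exists_posSemidef_sub (ptranspose₁_isHermitian hρ.1.isHermitian)
    refine ⟨((ptranspose₁ N).trace).re, ptranspose₁ P, ptranspose₁ N, ?_, ?_, ?_, rfl⟩
    · have := congrArg ptranspose₁ hPN
      rw [ptranspose₁_ptranspose₁, ptranspose₁_sub] at this
      exact this
    · rw [ptranspose₁_ptranspose₁]; exact hP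
    · rw [ptranspose₁_ptranspose₁]; exact hN
  · -- inclusion
    rintro t ⟨ρp, ρm, hdec, hPp, hPm, ht⟩
    have hρpH : ρp.IsHermitian := by
      have := ptranspose₁_isHermitian hPp.isHermitian
      rwa [ptranspose₁_ptranspose₁] at this
    have hρmH : ρm.IsHermitian := by
      have := ptranspose₁_isHermitian hPm.isHermitian
      rwa [ptranspose₁_ptranspose₁] at this
    refine ⟨fun a => contr (M a) (ptranspose₁ ρp), fun a => contr (M a) (ptranspose₁ ρm),
      ptrace₁ ρp, ptrace₁ ρm,
      fun a => contr_posSemidef (hM a) hPp, fun a => contr_posSemidef (hM a) hPm,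
      ptrace₁_isHermitian hρpH, ptrace₁_isHermitian hρmH, ?_, ?_, ?_, ?_⟩
    · intro a x
      rw [teleA_contr, hdec, ptranspose₁_sub, contr_sub, Matrix.sub_mul, ptrace₁_sub]
    · rw [sum_contr, hMsum, contr_one, ptrace₁_ptranspose₁]
    · rw [sum_contr, hMsum, contr_one, ptrace₁_ptranspose₁]
    · rw [ht, trace_ptrace₁]


end Tele
end
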